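/- For every positive integer n, the rational functions R_n(t) = (((t-1)···(t-n))/(t(t+1)···(t+n)))^2 and S_n(t) := s_n(t) R_n(t) with s_n(t) = 4(2n+1)(-2t^2+t+(2n+1)^2) satisfy the telescoping identity (n+1)^3 R_{n+1}(t) - (2n+1)(17n^2+17n+5) R_n(t) + n^3 R_{n-1}(t) = S_n(t+1) - S_n(t) for all t avoiding the poles. -/
import Mathlib

noncomputable def R (n : ℕ) (t : ℝ) : ℝ :=
  ((∏ j ∈ Finset.Icc 1 n, (t - j)) / (∏ j ∈ Finset.range (n + 1), (t + j))) ^ 2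

noncomputable def s (n : ℕ) (t : ℝ) : ℝ :=
  4 * (2 * n + 1) * (-2 * t ^ 2 + t + (2 * n + 1) ^ 2)

noncomputable def S (n : ℕ) (t : ℝ) : ℝ := s n t * R n t

theorem telescoping_identity (n : ℕ) (hn : 0 < n) (t : ℝ)
    (ht : ∀ j : ℕ, j ≤ n + 1 → t + j ≠ 0) :
    ((n : ℝ) + 1) ^ 3 * R (n + 1) t
      - (2 * n + 1) * (17 * n ^ 2 + 17 * n + 5) * R n t
      + (n : ℝ) ^ 3 * R (n - 1) t
    = S n (t + 1) - S n t := by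
  obtain ⟨m, rfl⟩ : ∃ m, n = m + 1 := ⟨n - 1, by omega⟩
  have ht0 : t ≠ 0 := by simpa using ht 0 (by omega)
  have htm1 : t + ((m : ℝ) + 1) ≠ 0 := by
    have := ht (m + 1) (by omega); push_cast at this; simpa [add_assoc] using this
  have htm2 : t + ((m : ℝ) + 2) ≠ 0 := by
    have := ht (m + 2) (by omega); push_cast at this; simpa [add_assoc] using this
  set P1 : ℝ := ∏ j ∈ Finset.Icc 1 m, (t - (j : ℕ)) with hP1
  set Q1 : ℝ := ∏ j ∈ Finset.range (m + 1), (t + (j : ℕ)) with hQ1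
  have hQ : Q1 ≠ 0 := by
    rw [hQ1, Finset.prod_ne_zero_iff]
    intro j hj
    exact ht j (by simp at hj; omega)
  have hA1 : (∏ j ∈ Finset.Icc 1 (m + 1), (t - (j : ℕ)))
      = P1 * (t - ((m : ℝ) + 1)) := by
    rw [Finset.prod_Icc_succ_top (by omega)]
    push_cast; rw [hP1]
  have hA2 : (∏ j ∈ Finset.Icc 1 (m + 1 + 1), (t - (j : ℕ)))
      = P1 * (t - ((m : ℝ) + 1)) * (t - ((m : ℝ) + 2)) := by
    rw [Finset.prod_Icc_succ_top (by omega), hA1]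
    push_cast; ring
  have hB1 : (∏ j ∈ Finset.range (m + 1 + 1), (t + (j : ℕ)))
      = Q1 * (t + ((m : ℝ) + 1)) := by
    rw [Finset.prod_range_succ]
    push_cast; rw [hQ1]
  have hB2 : (∏ j ∈ Finset.range (m + 1 + 1 + 1), (t + (j : ℕ)))
      = Q1 * (t + ((m : ℝ) + 1)) * (t + ((m : ℝ) + 2)) := by
    rw [Finset.prod_range_succ, hB1]
    push_cast; ring
  have hNum : (∏ j ∈ Finset.Icc 1 (m + 1), (t + 1 - (j : ℕ))) = t * P1 := by
    rw [← Finset.Ico_add_one_right_eq_Icc, Finset.prod_Ico_eq_prod_range]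
    rw [hP1, ← Finset.Ico_add_one_right_eq_Icc, Finset.prod_Ico_eq_prod_range]
    simp only [Nat.add_sub_cancel, Nat.succ_sub_one]
    rw [Finset.prod_range_succ']
    push_cast
    rw [mul_comm]
    congr 1
    · ring
    · exact Finset.prod_congr rfl fun i _ => by ring
  have hDen' : t * (∏ j ∈ Finset.range (m + 1 + 1), (t + 1 + (j : ℕ)))
      = Q1 * (t + ((m : ℝ) + 1)) * (t + ((m : ℝ) + 2)) := by
    rw [← hB2, Finset.prod_range_succ' (fun j => t + (j : ℕ)) (m + 1 + 1)]
    rw [mul_comm]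
    congr 1
    · exact Finset.prod_congr rfl fun i _ => by push_cast; ring
    · simp
  have hDen : (∏ j ∈ Finset.range (m + 1 + 1), (t + 1 + (j : ℕ)))
      = Q1 * (t + ((m : ℝ) + 1)) * (t + ((m : ℝ) + 2)) / t := by
    rw [eq_div_iff ht0]
    linear_combination hDen'
  have hm1 : m + 1 - 1 = m := rfl
  simp only [S, s, R, hm1, hA1, hA2, hB1, hB2, hNum, hDen, ← hP1, ← hQ1]
  push_cast
  field_simp
  ring
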